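/- Let R be a semiprime associative ring. Then every Lie nilpotent one-sided (left or right) ideal I of R is contained in the center Z(R) of R. -/

import Mathlib

/-- `I` is a right ideal of `R` (as an additive subgroup closed under right multiplication). -/
def IsRightIdealSG {R : Type*} [Ring R] (I : AddSubgroup R) : Prop :=
  ∀ i ∈ I, ∀ r : R, i * r ∈ I

/-- `I` is a left ideal of `R`. -/
def IsLeftIdealSG {R : Type*} [Ring R] (I : AddSubgroup R) : Prop :=
  ∀ i ∈ I, ∀ r : R, r * i ∈ I

/-- `I` is a two-sided ideal of `R`. -/
def IsIdealSG {R : Type*} [Ring R] (I : AddSubgroup R) : Prop :=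
  IsLeftIdealSG I ∧ IsRightIdealSG I

/-- Left-normed iterated commutator: `itComm s n = [[...[s 0, s 1],...], s n]`
(a left-normed commutator of `n + 1` elements). -/
def itComm {R : Type*} [Ring R] (s : ℕ → R) : ℕ → R
  | 0 => s 0
  | n + 1 => itComm s n * s (n + 1) - s (n + 1) * itComm s n

/-- `S` is Lie nilpotent of class ≤ m : every left-normed commutator of `m + 1`
elements of `S` vanishes. -/
def LieNilpotentClassLe {R : Type*} [Ring R] (S : Set R) (m : ℕ) : Prop :=
  ∀ s : ℕ → R, (∀ n, s n ∈ S) → itComm s m = 0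

/-- The Lie derived series of an additive subgroup `S` of a ring:
`D 0 = S`, `D (k+1)` = additive span of `[D k, D k]`. -/
def derSeries {R : Type*} [Ring R] (S : AddSubgroup R) : ℕ → AddSubgroup R
  | 0 => S
  | n + 1 => AddSubgroup.closure
      {x | ∃ a ∈ derSeries S n, ∃ b ∈ derSeries S n, x = a * b - b * a}

/-- `R^(−)_n`: the additive subgroup generated by all left-normed commutators of
`n` elements of `R`. -/
def lcs (R : Type*) [Ring R] (n : ℕ) : AddSubgroup R :=
  AddSubgroup.closure {x | ∃ s : ℕ → R, x = itComm s (n - 1)}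

/-- `R_n = R^(−)_n + R^(−)_n · R`, a two-sided ideal of `R`. -/
def Rn (R : Type*) [Ring R] (n : ℕ) : AddSubgroup R :=
  lcs R n ⊔ AddSubgroup.closure {x | ∃ c ∈ lcs R n, ∃ r : R, x = c * r}

/-- The additive span of `k`-fold products of elements of `S`. -/
def spanPow {R : Type*} [Ring R] (S : Set R) (k : ℕ) : AddSubgroup R :=
  AddSubgroup.closure {x | ∃ l : List R, l.length = k ∧ (∀ a ∈ l, a ∈ S) ∧ x = l.prod}

/-- `J` is nilpotent: all `k`-fold products of its elements vanish for some `k > 0`. -/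
def IsNilpotentSG {R : Type*} [Ring R] (J : AddSubgroup R) : Prop :=
  ∃ k : ℕ, 0 < k ∧ ∀ l : List R, l.length = k → (∀ a ∈ l, a ∈ J) → l.prod = 0

/-- `R` is semiprime: it has no nonzero nilpotent two-sided ideals. -/
def IsSemiprimeRing (R : Type*) [Ring R] : Prop :=
  ∀ J : AddSubgroup R, IsIdealSG J → IsNilpotentSG J → J = ⊥

/-- In a semiprime ring, if `d R d = 0` then `d = 0`: the two-sided ideal
generated by `d` has square zero. -/
lemma sp_dRd_zero {R : Type*} [Ring R] (hsp : IsSemiprimeRing R) (d : R)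
    (h : ∀ z : R, d * z * d = 0) : d = 0 := by
  set G : Set R := {x | ∃ u v : R, x = u * d * v} with hG
  have hgen : ∀ u v : R, u * d * v ∈ AddSubgroup.closure G :=
    fun u v => AddSubgroup.subset_closure ⟨u, v, rfl⟩
  have hmul0 : ∀ p ∈ AddSubgroup.closure G, ∀ q ∈ AddSubgroup.closure G, p * q = 0 := by
    intro p hp
    induction hp using AddSubgroup.closure_induction with
    | mem x hx =>
      obtain ⟨u, v, rfl⟩ := hx
      intro q hq
      induction hq using AddSubgroup.closure_induction with
      | mem y hy =>
        obtain ⟨u', v', rfl⟩ := hy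
        have h2 := h (v * u')
        calc u * d * v * (u' * d * v') = u * ((d * (v * u') * d) * v') := by
              simp only [mul_assoc]
          _ = 0 := by rw [h2, zero_mul, mul_zero]
      | zero => simp
      | add y z _ _ hy hz => rw [mul_add, hy, hz, add_zero]
      | neg y _ hy => rw [mul_neg, hy, neg_zero]
    | zero => intro q _; simp
    | add x y _ _ hx hy => intro q hq; rw [add_mul, hx q hq, hy q hq, add_zero]
    | neg x _ hx => intro q hq; rw [neg_mul, hx q hq, neg_zero]
  have hbot : AddSubgroup.closure G = ⊥ := by
    apply hsp
    · constructor
      · intro j hj r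
        induction hj using AddSubgroup.closure_induction with
        | mem x hx =>
          obtain ⟨u, v, rfl⟩ := hx
          have : r * (u * d * v) = (r * u) * d * v := by simp only [mul_assoc]
          rw [this]; exact hgen _ _
        | zero => simpa using AddSubgroup.zero_mem _
        | add x y _ _ hx hy => rw [mul_add]; exact AddSubgroup.add_mem _ hx hy
        | neg x _ hx => rw [mul_neg]; exact AddSubgroup.neg_mem _ hx
      · intro j hj r
        induction hj using AddSubgroup.closure_induction with
        | mem x hx =>
          obtain ⟨u, v, rfl⟩ := hx
          have : (u * d * v) * r = u * d * (v * r) := by simp only [mul_assoc]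
          rw [this]; exact hgen _ _
        | zero => simpa using AddSubgroup.zero_mem _
        | add x y _ _ hx hy => rw [add_mul]; exact AddSubgroup.add_mem _ hx hy
        | neg x _ hx => rw [neg_mul]; exact AddSubgroup.neg_mem _ hx
    · refine ⟨2, by norm_num, ?_⟩
      intro l hl hmem
      obtain ⟨a, b, rfl⟩ := List.length_eq_two.mp hl
      have := hmul0 a (hmem a (by simp)) b (hmem b (by simp))
      simp [this]
  have : d ∈ AddSubgroup.closure G := by simpa using hgen 1 1
  rw [hbot] at this
  simpa using this

/-- In a semiprime ring, an element of a one-sided ideal that commutes with the whole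
ideal is central. -/
lemma central_of_comm {R : Type*} [Ring R]
    (sp : ∀ d : R, (∀ z : R, d * z * d = 0) → d = 0)
    (I : AddSubgroup R) (hI : IsLeftIdealSG I ∨ IsRightIdealSG I)
    (a : R) (ha : a ∈ I) (hcm : ∀ j ∈ I, a * j = j * a) :
    ∀ r : R, a * r = r * a := by
  intro r
  rw [← sub_eq_zero]
  apply sp
  intro z
  rcases hI with hL | hR
  · -- left ideal case
    have h1 : ∀ x : R, (a * x - x * a) * a = 0 := by
      intro x
      have hx := hcm (x * a) (hL a ha x)
      rw [sub_mul, sub_eq_zero, mul_assoc, hx, mul_assoc]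
    have h2 : ∀ x y : R, (a * x - x * a) * y * a = 0 := by
      intro x y
      have key : (a * x - x * a) * y * a
          = (a * (x * y) - (x * y) * a) * a - x * ((a * y - y * a) * a) := by
        noncomm_ring
      rw [key, h1, h1, mul_zero, sub_zero]
    have key : (a * r - r * a) * z * (a * r - r * a)
        = ((a * r - r * a) * z * a) * r - (a * r - r * a) * (z * r) * a := by
      noncomm_ring
    rw [key, h2, h2, zero_mul, sub_zero]
  · -- right ideal case
    have h1 : ∀ x : R, a * (a * x - x * a) = 0 := by
      intro x
      have hx := hcm (a * x) (hR a ha x)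
      rw [mul_sub, sub_eq_zero, hx, mul_assoc]
    have h2 : ∀ x y : R, a * (x * (a * y - y * a)) = 0 := by
      intro x y
      have key : a * (x * (a * y - y * a))
          = a * (a * (x * y) - (x * y) * a) - a * (a * x - x * a) * y := by
        noncomm_ring
      rw [key, h1, h1, zero_mul, sub_zero]
    have key : (a * r - r * a) * z * (a * r - r * a)
        = a * ((r * z) * (a * r - r * a)) - r * (a * (z * (a * r - r * a))) := by
      noncomm_ring
    rw [key, h2, h2, mul_zero, sub_zero]

lemma itComm_congr {R : Type*} [Ring R] {s t : ℕ → R} :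
    ∀ n, (∀ k, k ≤ n → s k = t k) → itComm s n = itComm t n := by
  intro n
  induction n with
  | zero => intro h; exact h 0 le_rfl
  | succ n ih =>
    intro h
    show itComm s n * s (n+1) - s (n+1) * itComm s n
        = itComm t n * t (n+1) - t (n+1) * itComm t n
    rw [ih (fun k hk => h k (hk.trans (Nat.le_succ n))), h (n+1) le_rfl]

lemma itComm_mem {R : Type*} [Ring R] {I : AddSubgroup R}
    (hmul : ∀ a ∈ I, ∀ b ∈ I, a * b ∈ I) {s : ℕ → R} (hs : ∀ n, s n ∈ I) :
    ∀ n, itComm s n ∈ I := by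
  intro n
  induction n with
  | zero => exact hs 0
  | succ n ih =>
    exact AddSubgroup.sub_mem _ (hmul _ ih _ (hs _)) (hmul _ (hs _) _ ih)

lemma key_induction {R : Type*} [Ring R]
    (sp : ∀ d : R, (∀ z : R, d * z * d = 0) → d = 0)
    (I : AddSubgroup R) (hI : IsLeftIdealSG I ∨ IsRightIdealSG I) :
    ∀ m, LieNilpotentClassLe (I : Set R) m → ∀ i ∈ I, ∀ r : R, i * r = r * i := by
  have hmul : ∀ a ∈ I, ∀ b ∈ I, a * b ∈ I := by
    rcases hI with h | h
    · exact fun a _ b hb => h b hb a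
    · exact fun a ha b _ => h a ha b
  intro m
  induction m with
  | zero =>
    intro h i hi r
    have h0 := h (fun _ => i) (fun _ => hi)
    have : i = 0 := h0
    rw [this, zero_mul, mul_zero]
  | succ m ih =>
    intro h
    -- every left-normed commutator of `m + 1` elements of `I` is central
    have hc : ∀ s : ℕ → R, (∀ n, s n ∈ I) → ∀ r : R,
        itComm s m * r = r * itComm s m := by
      intro s hs
      apply central_of_comm sp I hI _ (itComm_mem hmul hs m)
      intro j hj
      have hu_mem : ∀ n, Function.update s (m+1) j n ∈ I := by
        intro n
        by_cases hn : n = m + 1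
        · subst hn; rw [Function.update_self]; exact hj
        · rw [Function.update_of_ne hn]; exact hs n
      have h0 := h _ hu_mem
      have hum : itComm (Function.update s (m+1) j) m = itComm s m :=
        itComm_congr m (fun k hk => Function.update_of_ne (by omega) _ _)
      have hform : itComm (Function.update s (m+1) j) (m+1)
          = itComm (Function.update s (m+1) j) m * Function.update s (m+1) j (m+1)
            - Function.update s (m+1) j (m+1) * itComm (Function.update s (m+1) j) m := rfl
      rw [hform, hum, Function.update_self] at h0
      exact sub_eq_zero.mp h0
    cases m with
    | zero =>
      intro i hi r
      exact hc (fun _ => i) (fun _ => hi) r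
    | succ k =>
      -- show the class drops to `k + 1` and recurse
      apply ih
      intro s hs
      set d := itComm s k with hd
      set b := s (k+1) with hb
      have hcform : itComm s (k+1) = d * b - b * d := rfl
      rw [hcform]
      set c := d * b - b * d with hcdef
      have hcen : ∀ r : R, c * r = r * c := by
        intro r
        have := hc s hs r
        rwa [hcform] at this
      -- the auxiliary central commutator `z = [d, d*b] = d*c`
      have hu2_mem : ∀ n, Function.update s (k+1) (d * b) n ∈ I := by
        intro n
        by_cases hn : n = k + 1
        · subst hn; rw [Function.update_self]
          exact hmul _ (itComm_mem hmul hs k) _ (hs _)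
        · rw [Function.update_of_ne hn]; exact hs n
      have hu2k : itComm (Function.update s (k+1) (d * b)) k = d :=
        itComm_congr k (fun j hj => Function.update_of_ne (by omega) _ _)
      have hz0 : itComm (Function.update s (k+1) (d * b)) (k+1) = d * (d*b) - (d*b) * d := by
        rw [show itComm (Function.update s (k+1) (d * b)) (k+1)
            = itComm (Function.update s (k+1) (d * b)) k * Function.update s (k+1) (d * b) (k+1)
              - Function.update s (k+1) (d * b) (k+1)
                * itComm (Function.update s (k+1) (d * b)) k from rfl,
          hu2k, Function.update_self]
      have hz : ∀ r : R, (d * (d*b) - (d*b) * d) * r = r * (d * (d*b) - (d*b) * d) := by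
        intro r
        have := hc _ hu2_mem r
        rwa [hz0] at this
      have hdc : d * c = d * (d*b) - (d*b) * d := by
        rw [hcdef]; noncomm_ring
      have hcc : c * c = 0 := by
        have e1 : c * c = d * (b * c) - b * (d * c) := by
          nth_rewrite 1 [hcdef]
          noncomm_ring
        rw [← hcen b, ← mul_assoc, hdc, hz b] at e1
        rw [e1, sub_self]
      apply sp
      intro z
      rw [mul_assoc, hcen (z * c), mul_assoc, hcc, mul_zero]

/-- **Corollary 2, first part.** In a semiprime ring every Lie nilpotent
one-sided ideal is contained in the center. -/
theorem semiprime_lie_nilpotent_ideal_central {R : Type*} [Ring R]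
    (hsp : IsSemiprimeRing R)
    (I : AddSubgroup R) (hI : IsLeftIdealSG I ∨ IsRightIdealSG I)
    (hnil : ∃ m, LieNilpotentClassLe (I : Set R) m) :
    ∀ i ∈ I, ∀ r : R, i * r = r * i := by
  obtain ⟨m, hm⟩ := hnil
  exact key_induction (fun d hd => sp_dRd_zero hsp d hd) I hI m hm
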